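/- Let 𝕋 be the unit circle with normalized Lebesgue (Haar) measure |·|, let (n_j) be a strictly increasing sequence of positive integers, and let E ⊆ 𝕋 be a measurable set with |E| > 0. Then it is not the case that z^{n_j} → 1 as j → ∞ for almost every z ∈ E. -/

import Mathlib

open Filter Topology MeasureTheory

/-- The normalized Lebesgue (Haar) measure on the unit circle `𝕋 ⊆ ℂ`, realized as the
pushforward of Lebesgue measure on `[0,1)` under `t ↦ e^{2πit}`. -/
noncomputable def circleHaar : Measure ℂ :=
  Measure.map (fun t : ℝ => Complex.exp ((2 * Real.pi * t : ℝ) * Complex.I))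
    (volume.restrict (Set.Ico (0 : ℝ) 1))

/-- If `E ⊆ 𝕋` is measurable with `|E| > 0` and `(n_j)` is a strictly
increasing sequence of positive integers, then it is not the case that `z^{n_j} → 1`
for almost every `z ∈ E`. -/
theorem not_ae_pow_tendsto_one
    (n : ℕ → ℕ) (hmono : StrictMono n) (hpos : ∀ j, 0 < n j)
    (E : Set ℂ) (hE : MeasurableSet E) (hE𝕋 : E ⊆ Metric.sphere (0 : ℂ) 1)
    (hpos' : 0 < circleHaar E) :
    ¬ (∀ᵐ z ∂(circleHaar.restrict E),
        Tendsto (fun j => z ^ n j) atTop (𝓝 (1 : ℂ))) := by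
  intro h
  set e : ℝ → ℂ := fun t => Complex.exp ((2 * Real.pi * t : ℝ) * Complex.I) with he
  have hem : Measurable e := by fun_prop
  -- finiteness
  have hfin : circleHaar E ≠ ⊤ := by
    have : circleHaar E ≤ circleHaar Set.univ := measure_mono (Set.subset_univ E)
    have h1 : circleHaar Set.univ = 1 := by
      rw [circleHaar, Measure.map_apply hem MeasurableSet.univ]
      simp [Real.volume_Ico]
    exact ne_top_of_le_ne_top (by simp [h1]) this
  -- the sequence of integrals
  -- Step A: dominated convergence gives tendsto to (circleHaar E).toReal
  have hA : Tendsto (fun j => ∫ z, z ^ n j ∂(circleHaar.restrict E)) atTop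
      (𝓝 (∫ _, (1:ℂ) ∂(circleHaar.restrict E))) := by
    refine tendsto_integral_of_dominated_convergence (fun _ => (1:ℝ)) ?_ ?_ ?_ h
    · exact fun j => (Continuous.aestronglyMeasurable (by continuity))
    · haveI : IsFiniteMeasure (circleHaar.restrict E) :=
        ⟨by rwa [Measure.restrict_apply_univ, lt_top_iff_ne_top]⟩
      exact integrable_const _
    · intro j
      filter_upwards [ae_restrict_mem hE] with z hz
      have : ‖z‖ = 1 := by simpa using hE𝕋 hz
      simp [norm_pow, this]
  have hconst : (∫ _, (1:ℂ) ∂(circleHaar.restrict E)) = ((circleHaar E).toReal : ℂ) := by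
    rw [integral_const, measureReal_def, Measure.restrict_apply_univ]
    simp
  -- Step B: Riemann-Lebesgue gives tendsto to 0
  set S : Set ℝ := Set.Ico (0:ℝ) 1 ∩ e ⁻¹' E with hS
  have hint : ∀ j, ∫ z, z ^ n j ∂(circleHaar.restrict E)
      = ∫ v : ℝ, Real.fourierChar (-(v * -(n j : ℝ))) • (S.indicator (fun _ => (1:ℂ)) v) := by
    intro j
    rw [circleHaar, Measure.restrict_map hem hE,
      integral_map hem.aemeasurable (Continuous.aestronglyMeasurable (by continuity))]
    rw [Measure.restrict_restrict (hem hE)]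
    rw [← integral_indicator (((hem hE).inter measurableSet_Ico))]
    congr 1
    ext v
    have hchar : ∀ t : ℝ, e t ^ n j = (Real.fourierChar (-(t * -(n j:ℝ))) : ℂ) := by
      intro t
      rw [Real.fourierChar_apply, he]
      simp only
      rw [← Complex.exp_nat_mul]
      push_cast
      ring_nf
    by_cases hv : v ∈ S
    · rw [Set.indicator_of_mem, Set.indicator_of_mem hv]
      · rw [hchar v]; simp [Circle.smul_def]
      · rw [hS] at hv; exact ⟨hv.2, hv.1⟩
    · rw [Set.indicator_of_notMem, Set.indicator_of_notMem hv]
      · simp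
      · exact fun hc => hv ⟨hc.2, hc.1⟩
  have hRL := Real.tendsto_integral_exp_smul_cocompact (S.indicator (fun _ => (1:ℂ)))
  have hcocompact : Tendsto (fun j => -(n j : ℝ)) atTop (cocompact ℝ) := by
    rw [cocompact_eq_atBot_atTop]
    refine Tendsto.mono_right ?_ le_sup_left
    exact tendsto_neg_atBot_iff.mpr (tendsto_natCast_atTop_atTop.comp hmono.tendsto_atTop)
  have hB : Tendsto (fun j => ∫ z, z ^ n j ∂(circleHaar.restrict E)) atTop (𝓝 0) := by
    simp_rw [hint]
    exact hRL.comp hcocompact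
  have := tendsto_nhds_unique hA hB
  rw [hconst] at this
  have : (circleHaar E).toReal = 0 := by exact_mod_cast this
  exact absurd (ENNReal.toReal_eq_zero_iff _ |>.mp this) (by simp [hpos'.ne', hfin])
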